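/- The nullcline value of a traveling wave lies strictly between the remaining and initial resource levels: assume 0 < φ ≤ 1, 0 < μ ≤ ψ, ω > 0, at least one of φ < 1 or μ < ψ, and 0 < c < 1. Let 0 < R⁻ < R⁺ satisfy the integral relation ∫_{R⁻}^{R⁺} K(r)/r dr = 0. Then K(R⁻) > 0 > K(R⁺); in particular, if R* denotes a zero of K, then R⁻ < R* < R⁺. -/
import Mathlib


open Real Filter intervalIntegral

/-- Nondimensional stationary-to-moving switching rate. -/
noncomputable def ksm (φ R : ℝ) : ℝ := φ - (φ - 1) * Real.exp (-R)

/-- Nondimensional moving-to-stationary switching rate. -/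
noncomputable def kms (ψ μ ω R : ℝ) : ℝ := ψ - (ψ - μ) * Real.exp (-ω * R)

/-- Nullcline function K(R) = k_sm(R)/c − k_ms(R)/(1−c). -/
noncomputable def Kfun (φ ψ μ ω c R : ℝ) : ℝ := ksm φ R / c - kms ψ μ ω R / (1 - c)

lemma Kanti (φ ψ μ ω c : ℝ) (hφ1 : φ ≤ 1) (hμψ : μ ≤ ψ) (hω : 0 < ω)
    (hne : φ < 1 ∨ μ < ψ) (hc0 : 0 < c) (hc1 : c < 1)
    {x y : ℝ} (hxy : x < y) : Kfun φ ψ μ ω c y < Kfun φ ψ μ ω c x := by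
  have hc1' : 0 < 1 - c := by linarith
  have ha : Real.exp (-y) < Real.exp (-x) := Real.exp_lt_exp.mpr (by linarith)
  have hb : Real.exp (-ω * y) < Real.exp (-ω * x) :=
    Real.exp_lt_exp.mpr (by nlinarith)
  have key : Kfun φ ψ μ ω c x - Kfun φ ψ μ ω c y =
      (1 - φ) * (Real.exp (-x) - Real.exp (-y)) / c
      + (ψ - μ) * (Real.exp (-ω * x) - Real.exp (-ω * y)) / (1 - c) := by
    unfold Kfun ksm kms
    field_simp
    ring
  have h1 : 0 ≤ (1 - φ) * (Real.exp (-x) - Real.exp (-y)) / c := by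
    apply div_nonneg _ hc0.le
    apply mul_nonneg (by linarith) (by linarith)
  have h2 : 0 ≤ (ψ - μ) * (Real.exp (-ω * x) - Real.exp (-ω * y)) / (1 - c) := by
    apply div_nonneg _ hc1'.le
    apply mul_nonneg (by linarith) (by linarith)
  rcases hne with h | h
  · have h1' : 0 < (1 - φ) * (Real.exp (-x) - Real.exp (-y)) / c := by
      apply div_pos _ hc0
      apply mul_pos (by linarith) (by linarith)
    linarith
  · have h2' : 0 < (ψ - μ) * (Real.exp (-ω * x) - Real.exp (-ω * y)) / (1 - c) := by
      apply div_pos _ hc1'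
      apply mul_pos (by linarith) (by linarith)
    linarith

lemma Kcont (φ ψ μ ω c : ℝ) : Continuous (Kfun φ ψ μ ω c) := by
  unfold Kfun ksm kms
  fun_prop

/-- The nullcline value of a traveling wave lies strictly between the remaining and
initial resource levels: if ∫_{R⁻}^{R⁺} K(r)/r dr = 0 then K(R⁻) > 0 > K(R⁺), and any zero
R* of K satisfies R⁻ < R* < R⁺. -/
theorem nullcline_between (φ ψ μ ω c Rminus Rplus : ℝ)
    (hφ0 : 0 < φ) (hφ1 : φ ≤ 1) (hμ0 : 0 < μ) (hμψ : μ ≤ ψ) (hω : 0 < ω)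
    (hne : φ < 1 ∨ μ < ψ) (hc0 : 0 < c) (hc1 : c < 1)
    (hRm : 0 < Rminus) (hRmp : Rminus < Rplus)
    (hzero : (∫ r in Rminus..Rplus, Kfun φ ψ μ ω c r / r) = 0) :
    (0 < Kfun φ ψ μ ω c Rminus ∧ Kfun φ ψ μ ω c Rplus < 0) ∧
    ∀ Rstar : ℝ, Kfun φ ψ μ ω c Rstar = 0 → Rminus < Rstar ∧ Rstar < Rplus := by
  have hanti : ∀ {x y : ℝ}, x < y → Kfun φ ψ μ ω c y < Kfun φ ψ μ ω c x :=
    fun hxy => Kanti φ ψ μ ω c hφ1 hμψ hω hne hc0 hc1 hxy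
  -- integrability of r ↦ K r / r on [Rminus, Rplus]
  have hInt : IntervalIntegrable (fun r => Kfun φ ψ μ ω c r / r) MeasureTheory.volume
      Rminus Rplus := by
    apply ContinuousOn.intervalIntegrable
    apply ContinuousOn.div (Kcont φ ψ μ ω c).continuousOn continuousOn_id
    intro x hx
    rw [Set.uIcc_of_le hRmp.le] at hx
    exact ne_of_gt (lt_of_lt_of_le hRm hx.1)
  have hKm : 0 < Kfun φ ψ μ ω c Rminus := by
    by_contra hle
    push_neg at hle
    have hneg : ∀ r ∈ Set.Ioo Rminus Rplus, 0 < -(Kfun φ ψ μ ω c r / r) := by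
      intro r hr
      have hK : Kfun φ ψ μ ω c r < 0 := lt_of_lt_of_le (hanti hr.1) hle
      have hr0 : 0 < r := lt_trans hRm hr.1
      have : Kfun φ ψ μ ω c r / r < 0 := div_neg_of_neg_of_pos hK hr0
      linarith
    have := intervalIntegral.intervalIntegral_pos_of_pos_on hInt.neg hneg hRmp
    simp only [Pi.neg_apply] at this
    rw [intervalIntegral.integral_neg, hzero] at this
    simp at this
  have hKp : Kfun φ ψ μ ω c Rplus < 0 := by
    by_contra hle
    push_neg at hle
    have hpos : ∀ r ∈ Set.Ioo Rminus Rplus, 0 < Kfun φ ψ μ ω c r / r := by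
      intro r hr
      have hK : 0 < Kfun φ ψ μ ω c r := lt_of_le_of_lt hle (hanti hr.2)
      exact div_pos hK (lt_trans hRm hr.1)
    have := intervalIntegral.intervalIntegral_pos_of_pos_on hInt hpos hRmp
    rw [hzero] at this
    exact lt_irrefl 0 this
  refine ⟨⟨hKm, hKp⟩, fun Rstar hKs => ⟨?_, ?_⟩⟩
  · by_contra hle
    push_neg at hle
    rcases lt_or_eq_of_le hle with h | h
    · exact absurd (hKs ▸ hanti h) (by linarith)
    · rw [h] at hKs; linarith
  · by_contra hle
    push_neg at hle
    rcases lt_or_eq_of_le hle with h | h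
    · exact absurd (hKs ▸ hanti h) (by linarith)
    · rw [← h] at hKs; linarith
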